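/- Let σ be a cyclic permutation of {1,…,n} (so the directed graph with edges (i, σ(i)) is a single directed cycle), d ≥ 1, and for each i let u*_i ∈ ℝ^d be a unit vector. Suppose x : [0,T] → (ℝ^d)^n is differentiable, satisfies xᵢ′(t) = u_{i,σ(i)}(x(t)) − u*_i for all i and t, and x_i(t) ≠ x_{σ(i)}(t) for all i and t ∈ [0,T]. Then ψ_c(x) = ∑_{i=1}^n (1/2)‖x_{σ(i)} − x_i‖·‖u_{i,σ(i)}(x) − u*_i‖² satisfies d/dt ψ_c(x(t)) = −(1/2) ∑_{i=1}^n ‖xᵢ′(t) − x_{σ(i)}′(t)‖² ≤ 0. -/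

import Mathlib

open Finset

/-- The bearing from agent `i` to agent `j`: the unit vector pointing from `x i` to `x j`,
or `0` when the agents coincide. -/
noncomputable def bearing {d n : ℕ} (x : Fin n → EuclideanSpace ℝ (Fin d)) (i j : Fin n) :
    EuclideanSpace ℝ (Fin d) :=
  ‖x j - x i‖⁻¹ • (x j - x i)

/-- The formation potential for a directed cycle given by the permutation `σ`:
`ψ_c(x) = ∑_i (1/2) ‖x_{σ(i)} - x_i‖ ‖u_{i,σ(i)}(x) - u*_i‖²`. -/
noncomputable def cyclePotential {d n : ℕ} (σ : Equiv.Perm (Fin n))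
    (ustar : Fin n → EuclideanSpace ℝ (Fin d))
    (x : Fin n → EuclideanSpace ℝ (Fin d)) : ℝ :=
  ∑ i, (1 / 2) * ‖x (σ i) - x i‖ * ‖bearing x i (σ i) - ustar i‖ ^ 2

section aux

variable {E : Type*} [NormedAddCommGroup E] [InnerProductSpace ℝ E]

lemma aux_key (z u : E) (hz : z ≠ 0) (hu : ‖u‖ = 1) :
    (1 / 2) * ‖z‖ * ‖‖z‖⁻¹ • z - u‖ ^ 2 = ‖z‖ - inner ℝ z u := by
  have hzn : ‖z‖ ≠ 0 := norm_ne_zero_iff.mpr hz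
  have h1 : ‖‖z‖⁻¹ • z‖ = 1 := by
    rw [norm_smul, norm_inv, norm_norm, inv_mul_cancel₀ hzn]
  rw [norm_sub_sq_real, h1, hu, real_inner_smul_left]
  field_simp
  ring

lemma aux_norm_deriv {f : ℝ → E} {f' : E} {t : ℝ} (hf : HasDerivAt f f' t)
    (h0 : f t ≠ 0) :
    HasDerivAt (fun s => ‖f s‖) (inner ℝ (‖f t‖⁻¹ • f t) f' : ℝ) t := by
  have hg : HasDerivAt (fun s => (inner ℝ (f s) (f s) : ℝ))
      ((inner ℝ (f t) f' : ℝ) + inner ℝ f' (f t)) t := hf.inner ℝ hf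
  have hgt : (inner ℝ (f t) (f t) : ℝ) ≠ 0 := by
    simpa [real_inner_self_eq_norm_sq] using pow_ne_zero 2 (norm_ne_zero_iff.mpr h0)
  have := hg.sqrt hgt
  have heq : (fun s => Real.sqrt (inner ℝ (f s) (f s) : ℝ)) = fun s => ‖f s‖ := by
    funext s
    rw [real_inner_self_eq_norm_mul_norm, Real.sqrt_mul_self (norm_nonneg _)]
  rw [heq] at this
  convert this using 1
  rw [real_inner_self_eq_norm_mul_norm, Real.sqrt_mul_self (norm_nonneg _),
    real_inner_smul_left, real_inner_comm f' (f t)]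
  have hn : ‖f t‖ ≠ 0 := norm_ne_zero_iff.mpr h0
  field_simp
  ring

end aux

theorem stmt_11 {d n : ℕ} (hd : 1 ≤ d)
    (σ : Equiv.Perm (Fin n)) (hcyc : σ.IsCycle) (hsupp : σ.support = Finset.univ)
    (ustar : Fin n → EuclideanSpace ℝ (Fin d))
    (hunit : ∀ i, ‖ustar i‖ = 1)
    (T : ℝ) (hT : 0 ≤ T)
    (x : ℝ → Fin n → EuclideanSpace ℝ (Fin d))
    (hode : ∀ i, ∀ t ∈ Set.Icc (0 : ℝ) T,
      HasDerivAt (fun s => x s i) (bearing (x t) i (σ i) - ustar i) t)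
    (hfree : ∀ i, ∀ t ∈ Set.Icc (0 : ℝ) T, x t i ≠ x t (σ i)) :
    ∀ t ∈ Set.Icc (0 : ℝ) T,
      HasDerivAt (fun s => cyclePotential σ ustar (x s))
        (-(1 / 2) * ∑ i, ‖(bearing (x t) i (σ i) - ustar i) -
            (bearing (x t) (σ i) (σ (σ i)) - ustar (σ i))‖ ^ 2) t ∧
      -(1 / 2) * ∑ i, ‖(bearing (x t) i (σ i) - ustar i) -
            (bearing (x t) (σ i) (σ (σ i)) - ustar (σ i))‖ ^ 2 ≤ 0 := by
  intro t ht
  classical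
  have key2 : ∀ t ∈ Set.Icc (0:ℝ) T,
      HasDerivAt (fun s => cyclePotential σ ustar (x s))
        (-(1 / 2) * ∑ i, ‖(bearing (x t) i (σ i) - ustar i) -
            (bearing (x t) (σ i) (σ (σ i)) - ustar (σ i))‖ ^ 2) t := by
    intro t ht
    set a : Fin n → EuclideanSpace ℝ (Fin d) :=
      fun i => bearing (x t) i (σ i) - ustar i with ha
    have hz : ∀ i, HasDerivAt (fun s => x s (σ i) - x s i) (a (σ i) - a i) t :=
      fun i => (hode (σ i) t ht).sub (hode i t ht)
    have hzt : ∀ i, x t (σ i) - x t i ≠ 0 :=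
      fun i => sub_ne_zero.mpr (hfree i t ht).symm
    have hev : ∀ᶠ s in nhds t, ∀ i, x s (σ i) - x s i ≠ 0 := by
      rw [Filter.eventually_all]
      exact fun i => (hz i).continuousAt.eventually_ne (hzt i)
    have heq : (fun s => cyclePotential σ ustar (x s)) =ᶠ[nhds t]
        fun s => ∑ i, (‖x s (σ i) - x s i‖ - (inner ℝ (x s (σ i) - x s i) (ustar i) : ℝ)) := by
      filter_upwards [hev] with s hs
      unfold cyclePotential bearing
      exact Finset.sum_congr rfl fun i _ => aux_key _ _ (hs i) (hunit i)
    have hterm : ∀ i ∈ (Finset.univ : Finset (Fin n)),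
        HasDerivAt (fun s => ‖x s (σ i) - x s i‖ - (inner ℝ (x s (σ i) - x s i) (ustar i) : ℝ))
          ((inner ℝ (a i) (a (σ i) - a i)) : ℝ) t := by
      intro i _
      have h1 := aux_norm_deriv (hz i) (hzt i)
      have h2 : HasDerivAt (fun s => (inner ℝ (x s (σ i) - x s i) (ustar i) : ℝ))
          ((inner ℝ (a (σ i) - a i) (ustar i)) : ℝ) t := by
        simpa using (hz i).inner ℝ (hasDerivAt_const t (ustar i))
      have := h1.sub h2
      convert this using 1
      case e'_4 => rfl
      case e'_5 => rfl
      case e'_8 => rfl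
      have hb : (‖x t (σ i) - x t i‖⁻¹ • (x t (σ i) - x t i)) = bearing (x t) i (σ i) := rfl
      rw [hb, ha]
      rw [inner_sub_left, real_inner_comm (ustar i)]
    have hs := HasDerivAt.fun_sum hterm
    have hval : ∑ i, ((inner ℝ (a i) (a (σ i) - a i)) : ℝ)
        = -(1 / 2) * ∑ i, ‖a i - a (σ i)‖ ^ 2 := by
      have h3 : ∑ i, ‖a (σ i)‖ ^ 2 = ∑ i, ‖a i‖ ^ 2 :=
        Equiv.sum_comp σ (fun i => ‖a i‖ ^ 2)
      have hl : ∀ i, (inner ℝ (a i) (a (σ i) - a i) : ℝ)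
          = (inner ℝ (a i) (a (σ i)) : ℝ) - ‖a i‖ ^ 2 := by
        intro i; rw [inner_sub_right, real_inner_self_eq_norm_sq]
      have hexp : ∀ i, ‖a i - a (σ i)‖ ^ 2
          = ‖a i‖ ^ 2 - 2 * (inner ℝ (a i) (a (σ i)) : ℝ) + ‖a (σ i)‖ ^ 2 :=
        fun i => norm_sub_sq_real _ _
      have hL : ∑ i, (inner ℝ (a i) (a (σ i) - a i) : ℝ)
          = (∑ i, (inner ℝ (a i) (a (σ i)) : ℝ)) - ∑ i, ‖a i‖ ^ 2 := by
        rw [← Finset.sum_sub_distrib]; exact Finset.sum_congr rfl fun i _ => hl i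
      have hR : ∑ i, ‖a i - a (σ i)‖ ^ 2
          = ((∑ i, ‖a i‖ ^ 2) - 2 * ∑ i, (inner ℝ (a i) (a (σ i)) : ℝ)) + ∑ i, ‖a (σ i)‖ ^ 2 := by
        rw [Finset.mul_sum, ← Finset.sum_sub_distrib, ← Finset.sum_add_distrib]
        exact Finset.sum_congr rfl fun i _ => hexp i
      rw [hL, hR, h3]; ring
    rw [← hval]
    exact heq.hasDerivAt_iff.mpr hs
  refine ⟨key2 t ht, ?_⟩
  have hS : (0:ℝ) ≤ ∑ i, ‖(bearing (x t) i (σ i) - ustar i) -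
      (bearing (x t) (σ i) (σ (σ i)) - ustar (σ i))‖ ^ 2 :=
    Finset.sum_nonneg fun i _ => sq_nonneg _
  nlinarith
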